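/- Let k be a field and a < b, c < d in ℝ. The sheaf Ext of interval modules satisfies Ext¹_sh(k[a,b), k[c,d)) ≅ k(−∞,c) if a < c ≤ b < d, and is 0 otherwise. -/

import Mathlib

open CategoryTheory

noncomputable section
attribute [local instance] Classical.propDecidable
set_option linter.unusedSectionVars false

variable (R : Type) [Ring R] {P : Type} [Preorder P]

/-- Condition that a subset is order-convex. -/
def IsConvexSet (I : Set P) : Prop := ∀ ⦃x y z : P⦄, x ∈ I → z ∈ I → x ≤ y → y ≤ z → y ∈ I

/-- The value of the interval persistence module at a point. -/
def intervalObj (I : Set P) (a : P) : Submodule R R :=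
  if a ∈ I then (⊤ : Submodule R R) else ⊥

lemma intervalObj_eq_zero {I : Set P} {a : P} (h : a ∉ I) (x : intervalObj R I a) :
    x = 0 := by
  have hx := x.2
  simp only [intervalObj, if_neg h, Submodule.mem_bot] at hx
  exact Subtype.ext hx

/-- The structure map of the interval module between two degrees. -/
def intervalMapAux (I : Set P) (a b : P) :
    (intervalObj R I a) →ₗ[R] (intervalObj R I b) :=
  if h : a ∈ I ∧ b ∈ I then
    Submodule.inclusion (by simp [intervalObj, h.1, h.2])
  else 0

lemma intervalMapAux_coe {I : Set P} {a b : P} (ha : a ∈ I) (hb : b ∈ I)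
    (x : intervalObj R I a) : ((intervalMapAux R I a b x : R)) = (x : R) := by
  simp [intervalMapAux, ha, hb]

lemma intervalMapAux_of_not {I : Set P} {a b : P} (h : ¬(a ∈ I ∧ b ∈ I))
    (x : intervalObj R I a) : intervalMapAux R I a b x = 0 := by
  simp [intervalMapAux, h]

/-- The interval (indicator) persistence module of a convex set `I`,
as a functor from the preorder `P` to `R`-modules. -/
def intervalModule (I : Set P) (hI : IsConvexSet I) : P ⥤ ModuleCat R where
  obj a := ModuleCat.of R (intervalObj R I a)
  map {a b} f := ModuleCat.ofHom (intervalMapAux R I a b)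
  map_id a := by
    apply ModuleCat.hom_ext
    refine LinearMap.ext fun (x : intervalObj R I a) => ?_
    by_cases h : a ∈ I
    · exact Subtype.ext (intervalMapAux_coe R h h x)
    · rw [intervalObj_eq_zero R h x]
      simp
  map_comp {a b c} f g := by
    apply ModuleCat.hom_ext
    refine LinearMap.ext fun (x : intervalObj R I a) => ?_
    show intervalMapAux R I a c x = intervalMapAux R I b c (intervalMapAux R I a b x)
    by_cases ha : a ∈ I
    · by_cases hc : c ∈ I
      · have hb : b ∈ I := hI ha hc (leOfHom f) (leOfHom g)
        apply Subtype.ext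
        rw [intervalMapAux_coe R ha hc, intervalMapAux_coe R hb hc,
          intervalMapAux_coe R ha hb]
      · rw [intervalMapAux_of_not R (fun h => hc h.2),
          intervalMapAux_of_not R (fun h => hc h.2)]
    · rw [intervalObj_eq_zero R ha x]
      simp

end

lemma IsConvexSet.of_ordConnected {P : Type} [Preorder P] {s : Set P}
    (h : s.OrdConnected) : IsConvexSet s :=
  fun _ _ _ hx hz hxy hyz => h.out hx hz ⟨hxy, hyz⟩

open CategoryTheory

noncomputable section
variable (k : Type) [Field k]

/-- The inclusion of the principal up-set `[x,∞)` into `ℝ`. -/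
def upIncl (x : ℝ) : {y : ℝ // x ≤ y} ⥤ ℝ :=
  Monotone.functor (f := Subtype.val) (fun _ _ h => h)

/-- For `x ≤ y`, the inclusion of up-sets `[y,∞) ⊆ [x,∞)`. -/
def upRestrict {x y : ℝ} (h : x ≤ y) : {z : ℝ // y ≤ z} ⥤ {z : ℝ // x ≤ z} :=
  Monotone.functor (f := fun z => ⟨z.1, h.trans z.2⟩) (fun _ _ hh => hh)

/-- The sheaf internal hom of persistence modules: its stalk at `x` is the space of
natural transformations between the restrictions of `M` and `N` to the principal
up-set `[x,∞)`, with structure maps given by further restriction. -/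
def homScript (M N : ℝ ⥤ ModuleCat k) : ℝ ⥤ ModuleCat k where
  obj x := ModuleCat.of k ((upIncl x ⋙ M) ⟶ (upIncl x ⋙ N))
  map {x y} f := ModuleCat.ofHom
    { toFun := fun α => Functor.whiskerLeft (upRestrict (leOfHom f)) α
      map_add' := fun α β => by
        apply NatTrans.ext
        funext z
        rfl
      map_smul' := fun c α => by
        apply NatTrans.ext
        funext z
        rfl }
  map_id x := by
    ext α
    rfl
  map_comp {x y z} f g := by
    ext α
    rfl

/-- Contravariant functoriality of the sheaf internal hom in the first variable. -/
def homScriptContraMap {M' M : ℝ ⥤ ModuleCat k} (φ : M' ⟶ M) (N : ℝ ⥤ ModuleCat k) :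
    homScript k M N ⟶ homScript k M' N where
  app x := ModuleCat.ofHom
    { toFun := fun α => Functor.whiskerLeft (upIncl x) φ ≫ α
      map_add' := fun α β => Preadditive.comp_add _ _ _ _ _ _
      map_smul' := fun c α => Linear.comp_smul _ _ _ _ _ _ }
  naturality {x y} f := by
    ext α
    apply NatTrans.ext
    funext z
    rfl

end

open CategoryTheory

noncomputable section
attribute [local instance] Classical.propDecidable
set_option linter.unusedSectionVars false
variable (R : Type) [Ring R] {P : Type} [Preorder P]

/-- The degreewise component of a morphism between interval modules. -/
def intervalCross (I J : Set P) (a : P) :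
    (intervalObj R I a) →ₗ[R] (intervalObj R J a) :=
  if h : a ∈ I ∧ a ∈ J then
    Submodule.inclusion (by simp [intervalObj, h.1, h.2])
  else 0

lemma intervalCross_coe {I J : Set P} {a : P} (hI : a ∈ I) (hJ : a ∈ J)
    (x : intervalObj R I a) : ((intervalCross R I J a x : R)) = (x : R) := by
  simp [intervalCross, hI, hJ]

lemma intervalCross_of_not {I J : Set P} {a : P} (h : ¬(a ∈ I ∧ a ∈ J))
    (x : intervalObj R I a) : intervalCross R I J a x = 0 := by
  simp [intervalCross, h]

/-- The canonical morphism of interval persistence modules, whose component at a point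
in `I ∩ J` is the identity of `R` and which is zero elsewhere.  The hypothesis `hcond`
is exactly the condition making this family of maps natural. -/
def intervalHom (I J : Set P) (hI : IsConvexSet I) (hJ : IsConvexSet J)
    (hcond : ∀ ⦃x y : P⦄, x ≤ y → x ∈ I → y ∈ J → (y ∈ I ↔ x ∈ J)) :
    intervalModule R I hI ⟶ intervalModule R J hJ where
  app a := ModuleCat.ofHom (intervalCross R I J a)
  naturality {a b} f := by
    apply ModuleCat.hom_ext
    refine LinearMap.ext fun (x : intervalObj R I a) => ?_
    show intervalCross R I J b (intervalMapAux R I a b x) =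
      intervalMapAux R J a b (intervalCross R I J a x)
    by_cases ha : a ∈ I
    · by_cases hbJ : b ∈ J
      · have hiff := hcond (leOfHom f) ha hbJ
        by_cases hbI : b ∈ I
        · have haJ : a ∈ J := hiff.mp hbI
          apply Subtype.ext
          rw [intervalCross_coe R hbI hbJ, intervalMapAux_coe R ha hbI,
            intervalMapAux_coe R haJ hbJ, intervalCross_coe R ha haJ]
        · have haJ : a ∉ J := fun h => hbI (hiff.mpr h)
          rw [intervalCross_of_not R (fun h => hbI h.1),
            intervalCross_of_not R (fun h => haJ h.2)]
          simp
      · rw [intervalCross_of_not R (fun h => hbJ h.2),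
          intervalMapAux_of_not R (fun h => hbJ h.2)]
    · rw [intervalObj_eq_zero R ha x]
      simp

end

namespace ShExtAux

open CategoryTheory Limits

noncomputable section
variable {k : Type} [Field k]

/-- element constructor -/
def elt {I : Set ℝ} {p : ℝ} (hp : p ∈ I) (t : k) : intervalObj k I p :=
  ⟨t, by simp [intervalObj, hp]⟩

/-- value extractor -/
def vl {I : Set ℝ} {p : ℝ} (v : intervalObj k I p) : k := v.1

@[simp] lemma vl_elt {I : Set ℝ} {p : ℝ} (hp : p ∈ I) (t : k) : vl (elt hp t) = t := rfl

lemma eq_elt_vl {I : Set ℝ} {p : ℝ} (hp : p ∈ I) (v : intervalObj k I p) :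
    v = elt hp (vl v) := Subtype.ext rfl

@[simp] lemma vl_smul {I : Set ℝ} {p : ℝ} (t : k) (v : intervalObj k I p) :
    vl (t • v) = t * vl v := rfl

@[simp] lemma vl_add {I : Set ℝ} {p : ℝ} (v w : intervalObj k I p) :
    vl (v + w) = vl v + vl w := rfl

@[simp] lemma vl_zero {I : Set ℝ} {p : ℝ} : vl (0 : intervalObj k I p) = 0 := rfl

lemma vl_eq_zero {I : Set ℝ} {p : ℝ} {v : intervalObj k I p} (h : vl v = 0) : v = 0 :=
  Subtype.ext h

lemma eq_smul_elt_one {I : Set ℝ} {p : ℝ} (hp : p ∈ I) (v : intervalObj k I p) :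
    v = (vl v) • elt hp 1 := Subtype.ext (by simp [vl, elt])

lemma vl_mapAux {I : Set ℝ} {p q : ℝ} (hp : p ∈ I) (hq : q ∈ I) (v : intervalObj k I p) :
    vl (intervalMapAux k I p q v) = vl v := intervalMapAux_coe k hp hq v

lemma mapAux_elt {I : Set ℝ} {p q : ℝ} (hp : p ∈ I) (hq : q ∈ I) (t : k) :
    intervalMapAux k I p q (elt hp t) = elt hq t :=
  Subtype.ext (intervalMapAux_coe k hp hq _)

section Beta

variable {x : ℝ} {I J : Set ℝ} {hI : IsConvexSet I} {hJ : IsConvexSet J}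
variable (β : (upIncl x ⋙ intervalModule k I hI) ⟶ (upIncl x ⋙ intervalModule k J hJ))

lemma beta_natural {p q : {y : ℝ // x ≤ y}} (hpq : p ≤ q) (v : intervalObj k I p.1) :
    β.app q (intervalMapAux k I p.1 q.1 v) = intervalMapAux k J p.1 q.1 (β.app p v) := by
  have h := β.naturality (homOfLE hpq)
  exact congrArg (fun g : (upIncl x ⋙ intervalModule k I hI).obj p ⟶
    (upIncl x ⋙ intervalModule k J hJ).obj q => g.hom v) h

lemma beta_zero_from {p q : {y : ℝ // x ≤ y}} (hpq : p ≤ q) (hpI : p.1 ∈ I)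
    (hqI : q.1 ∈ I) (hpJ : p.1 ∉ J) (t : k) :
    β.app q (elt hqI t) = 0 := by
  erw [← mapAux_elt hpI hqI t, beta_natural β hpq,
    intervalObj_eq_zero k hpJ (β.app p (elt hpI t)), map_zero]
  rfl

lemma beta_scalar {p q : {y : ℝ // x ≤ y}} (hpq : p ≤ q) (hpI : p.1 ∈ I)
    (hqI : q.1 ∈ I) (hpJ : p.1 ∈ J) (hqJ : q.1 ∈ J) (t : k) :
    β.app q (elt hqI t) = elt hqJ (vl (β.app p (elt hpI 1)) * t) := by
  erw [← mapAux_elt hpI hqI t, beta_natural β hpq]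
  have h2 : β.app p (elt hpI t) = elt hpJ (vl (β.app p (elt hpI 1)) * t) := by
    have h3 : (elt hpI t : intervalObj k I p.1) = t • elt hpI 1 := Subtype.ext (by simp [vl, elt])
    erw [h3, map_smul]
    refine Subtype.ext ?_
    show vl (t • β.app p (elt hpI 1)) = vl (β.app p (elt hpI 1)) * t
    erw [vl_smul, mul_comm]
  erw [h2, mapAux_elt hpJ hqJ]

end Beta

end
end ShExtAux

namespace ShExtAux
open CategoryTheory Limits
noncomputable section
variable {k : Type} [Field k]

lemma contra_app_apply {M' M N : ℝ ⥤ ModuleCat k} (φ : M' ⟶ M) (x : ℝ)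
    (α : (upIncl x ⋙ M) ⟶ (upIncl x ⋙ N)) (p : {y : ℝ // x ≤ y}) (v : (upIncl x ⋙ M').obj p) :
    ((homScriptContraMap k φ N).app x α).app p v = α.app p (φ.app p.1 v) := rfl

variable {c d : ℝ}

/-- the standard componentwise map -/
def stdApp (lam : k) (c d : ℝ) (I : Set ℝ) (p : ℝ) :
    intervalObj k I p →ₗ[k] intervalObj k (Set.Ico c d) p where
  toFun v := if hp : p ∈ Set.Ico c d then elt hp (lam * vl v) else 0
  map_add' v w := by
    by_cases hp : p ∈ Set.Ico c d
    · rw [dif_pos hp, dif_pos hp, dif_pos hp]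
      exact Subtype.ext (mul_add lam (vl v) (vl w))
    · rw [dif_neg hp, dif_neg hp, dif_neg hp, add_zero]
  map_smul' t v := by
    by_cases hp : p ∈ Set.Ico c d
    · rw [RingHom.id_apply, dif_pos hp, dif_pos hp]
      refine Subtype.ext ?_
      show lam * (t * vl v) = t * (lam * vl v)
      ring
    · rw [RingHom.id_apply, dif_neg hp, dif_neg hp, smul_zero]

lemma stdApp_pos (lam : k) {I : Set ℝ} {p : ℝ} (hp : p ∈ Set.Ico c d)
    (v : intervalObj k I p) : stdApp lam c d I p v = elt hp (lam * vl v) := dif_pos hp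

lemma stdApp_neg (lam : k) {I : Set ℝ} {p : ℝ} (hp : p ∉ Set.Ico c d)
    (v : intervalObj k I p) : stdApp lam c d I p v = 0 := dif_neg hp

/-- the standard natural transformation -/
def stdNat (lam : k) (x : ℝ) (I : Set ℝ) (hICvx : IsConvexSet I)
    (hNCvx : IsConvexSet (Set.Ico c d))
    (hup : ∀ ⦃p q : ℝ⦄, p ∈ I → p ≤ q → q ∈ I)
    (hcI : ∀ p : {y : ℝ // x ≤ y}, p.1 ∈ I → c ≤ p.1) :
    (upIncl x ⋙ intervalModule k I hICvx) ⟶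
      (upIncl x ⋙ intervalModule k (Set.Ico c d) hNCvx) where
  app p := ModuleCat.ofHom (stdApp lam c d I p.1)
  naturality {p q} f := by
    refine ModuleCat.hom_ext (LinearMap.ext fun v => ?_)
    show stdApp lam c d I q.1 (intervalMapAux k I p.1 q.1 v)
      = intervalMapAux k (Set.Ico c d) p.1 q.1 (stdApp lam c d I p.1 v)
    by_cases hpa : p.1 ∈ I
    · have hqa : q.1 ∈ I := hup hpa (leOfHom f)
      have hpc : c ≤ p.1 := hcI p hpa
      by_cases hqd : q.1 < d
      · have hp : p.1 ∈ Set.Ico c d := ⟨hpc, lt_of_le_of_lt (leOfHom f) hqd⟩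
        have hq : q.1 ∈ Set.Ico c d := ⟨hpc.trans (leOfHom f), hqd⟩
        erw [stdApp_pos lam hq, stdApp_pos lam hp, mapAux_elt hp hq]
        exact congrArg (elt hq) (congrArg (lam * ·) (vl_mapAux hpa hqa v))
      · have hq' : q.1 ∉ Set.Ico c d := fun hmem => hqd hmem.2
        rw [stdApp_neg lam hq']
        exact (intervalObj_eq_zero k hq' _).symm
    · rw [intervalObj_eq_zero k hpa v]
      simp

lemma stdNat_app (lam : k) (x : ℝ) (I : Set ℝ) (hICvx : IsConvexSet I)
    (hNCvx : IsConvexSet (Set.Ico c d)) (hup) (hcI) (p : {y : ℝ // x ≤ y})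
    (v : intervalObj k I p.1) :
    (stdNat lam x I hICvx hNCvx hup hcI).app p v = stdApp lam c d I p.1 v := rfl

section TargetZero

variable {b : ℝ} {x : ℝ} {hIb : IsConvexSet (Set.Ici b)} {hN : IsConvexSet (Set.Ico c d)}
variable (β : (upIncl x ⋙ intervalModule k (Set.Ici b) hIb) ⟶
  (upIncl x ⋙ intervalModule k (Set.Ico c d) hN))

lemma target_eq_zero
    (H : ∀ (p : {y : ℝ // x ≤ y}) (hp : p.1 ∈ Set.Ici b), p.1 ∈ Set.Ico c d →
      β.app p (elt hp 1) = 0) : β = 0 := by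
  refine NatTrans.ext (funext fun p => ?_)
  rw [NatTrans.app_zero]
  refine ModuleCat.hom_ext (LinearMap.ext fun v => ?_)
  rw [ModuleCat.hom_zero, LinearMap.zero_apply]
  by_cases hp : p.1 ∈ Set.Ici b
  · by_cases hp2 : p.1 ∈ Set.Ico c d
    · calc β.app p v = β.app p ((vl v : k) • elt hp 1) := by
            erw [← eq_smul_elt_one hp v]
        _ = (vl v : k) • β.app p (elt hp 1) := map_smul _ _ _
        _ = 0 := by rw [H p hp hp2, smul_zero]
    · exact intervalObj_eq_zero k hp2 _
  · erw [intervalObj_eq_zero k hp v, map_zero]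

lemma target_zero_of_d_le (h : d ≤ b ∨ d ≤ x) : β = 0 :=
  target_eq_zero β fun p hp hp2 =>
    absurd hp2.2 (not_lt.mpr (h.elim (fun h' => h'.trans hp) (fun h' => h'.trans p.2)))

lemma target_zero_of_lt_c (hbc : b < c) (hxc : x < c) : β = 0 :=
  target_eq_zero β fun p hp _ =>
    beta_zero_from β (p := ⟨max b x, le_max_right b x⟩) (q := p)
      (max_le hp p.2) (le_max_left b x) hp
      (fun hmem => absurd hmem.1 (not_le.mpr (max_lt hbc hxc))) 1

lemma target_zero_of_app_b_zero (hcb : c ≤ b) (hbd : b < d) (hxb : x ≤ b)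
    (hb0 : β.app ⟨b, hxb⟩ (elt (le_refl b : b ∈ Set.Ici b) 1) = 0) : β = 0 := by
  refine target_eq_zero β fun p hp hp2 => ?_
  rw [beta_scalar β (p := ⟨b, hxb⟩) (q := p) hp (le_refl b) hp ⟨hcb, hbd⟩ hp2 1, hb0]
  exact vl_eq_zero (by simp; rfl)

end TargetZero
end
end ShExtAux

namespace ShExtAux
open CategoryTheory Limits
noncomputable section
variable {k : Type} [Field k]
variable {a b c d : ℝ}

section Surj
variable (hIa : IsConvexSet (Set.Ici a)) (hIb : IsConvexSet (Set.Ici b))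
variable (hN : IsConvexSet (Set.Ico c d))
variable (hcond : ∀ ⦃x y : ℝ⦄, x ≤ y → x ∈ Set.Ici b → y ∈ Set.Ici a →
  (y ∈ Set.Ici b ↔ x ∈ Set.Ici a))

lemma phi_app_surjective (hab : a < b) (hcd : c < d) (x : ℝ)
    (h : (c ≤ a ∨ c ≤ x) ∨ (b < c ∧ x < c) ∨ (d ≤ b ∨ d ≤ x)) :
    Function.Surjective ((homScriptContraMap k
      (intervalHom k (Set.Ici b) (Set.Ici a) hIb hIa hcond)
      (intervalModule k (Set.Ico c d) hN)).app x) := by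
  intro β
  rcases h with h1 | h2 | h3
  · by_cases hdm : d ≤ b ∨ d ≤ x
    · exact ⟨0, by rw [map_zero]; exact (target_zero_of_d_le β hdm).symm⟩
    push_neg at hdm
    have hbd : b < d := hdm.1
    have hxd : x < d := hdm.2
    have hxm : x ≤ max (max b x) c := le_trans (le_max_right b x) (le_max_left _ _)
    have hbm : max (max b x) c ∈ Set.Ici b := le_trans (le_max_left b x) (le_max_left _ _)
    have hmIco : max (max b x) c ∈ Set.Ico c d :=
      ⟨le_max_right _ _, max_lt (max_lt hbd hxd) hcd⟩
    set lam : k := vl (β.app ⟨max (max b x) c, hxm⟩ (elt hbm 1)) with hlam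
    have key : ∀ p : {y : ℝ // x ≤ y}, p.1 ∈ Set.Ici a → c ≤ p.1 :=
      fun p hpa => h1.elim (fun h' => h'.trans hpa) (fun h' => h'.trans p.2)
    have hup : ∀ ⦃p q : ℝ⦄, p ∈ Set.Ici a → p ≤ q → q ∈ Set.Ici a :=
      fun p q hp hpq => le_trans hp hpq
    refine ⟨stdNat lam x (Set.Ici a) hIa hN hup key, ?_⟩
    refine NatTrans.ext (funext fun p => ModuleCat.hom_ext (LinearMap.ext fun v => ?_))
    rw [contra_app_apply]
    by_cases hpb : p.1 ∈ Set.Ici b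
    · have hpa : p.1 ∈ Set.Ici a := le_trans hab.le hpb
      have hcross : (intervalHom k (Set.Ici b) (Set.Ici a) hIb hIa hcond).app p.1 v
          = elt hpa (vl v) := Subtype.ext (intervalCross_coe k hpb hpa v)
      rw [hcross, stdNat_app]
      by_cases hpIco : p.1 ∈ Set.Ico c d
      · rw [stdApp_pos lam hpIco]
        have hmp : (⟨max (max b x) c, hxm⟩ : {y : ℝ // x ≤ y}) ≤ p :=
          max_le (max_le hpb p.2) hpIco.1
        have hv : β.app p v = elt hpIco (lam * vl v) := by
          conv_lhs => rw [eq_elt_vl hpb v]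
          erw [beta_scalar β hmp hbm hpb hmIco hpIco (vl v)]
        rw [hv]
        exact congrArg (elt hpIco) (congrArg (lam * ·) (vl_elt hpa (vl v)))
      · rw [stdApp_neg lam hpIco]
        exact (intervalObj_eq_zero k hpIco _).symm
    · erw [intervalObj_eq_zero k hpb v, map_zero, map_zero, map_zero]
  · exact ⟨0, by rw [map_zero]; exact (target_zero_of_lt_c β h2.1 h2.2).symm⟩
  · exact ⟨0, by rw [map_zero]; exact (target_zero_of_d_le β h3).symm⟩

end Surj

section Psi
variable (hIb : IsConvexSet (Set.Ici b)) (hN : IsConvexSet (Set.Ico c d))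
variable (hIio : IsConvexSet (Set.Iio c))

/-- underlying function of `ψ` -/
def psiFun (hcb : c ≤ b) (x : ℝ)
    (β : (upIncl x ⋙ intervalModule k (Set.Ici b) hIb) ⟶
      (upIncl x ⋙ intervalModule k (Set.Ico c d) hN)) :
    intervalObj k (Set.Iio c) x :=
  if hx : x < c then
    elt (show x ∈ Set.Iio c from hx)
      (vl (β.app ⟨b, le_trans hx.le hcb⟩ (elt (le_refl b : b ∈ Set.Ici b) 1)))
  else 0

lemma psiFun_pos (hcb : c ≤ b) {x : ℝ} (hx : x < c)
    (β : (upIncl x ⋙ intervalModule k (Set.Ici b) hIb) ⟶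
      (upIncl x ⋙ intervalModule k (Set.Ico c d) hN)) :
    psiFun hIb hN hcb x β = elt (show x ∈ Set.Iio c from hx)
      (vl (β.app ⟨b, le_trans hx.le hcb⟩ (elt (le_refl b : b ∈ Set.Ici b) 1))) :=
  dif_pos hx

lemma psiFun_neg (hcb : c ≤ b) {x : ℝ} (hx : ¬ x < c)
    (β : (upIncl x ⋙ intervalModule k (Set.Ici b) hIb) ⟶
      (upIncl x ⋙ intervalModule k (Set.Ico c d) hN)) :
    psiFun hIb hN hcb x β = 0 := dif_neg hx

/-- the cokernel map `ψ` -/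
def psi (hcb : c ≤ b) :
    homScript k (intervalModule k (Set.Ici b) hIb) (intervalModule k (Set.Ico c d) hN) ⟶
      intervalModule k (Set.Iio c) hIio where
  app x := ModuleCat.ofHom
    { toFun := psiFun hIb hN hcb x
      map_add' := fun β γ => by
        by_cases hx : x < c
        · rw [psiFun_pos hIb hN hcb hx, psiFun_pos hIb hN hcb hx, psiFun_pos hIb hN hcb hx]
          refine Subtype.ext ?_
          show vl ((β + γ).app ⟨b, le_trans hx.le hcb⟩ (elt (le_refl b) 1)) = _
          rw [NatTrans.app_add]
          rfl
        · rw [psiFun_neg hIb hN hcb hx, psiFun_neg hIb hN hcb hx, psiFun_neg hIb hN hcb hx,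
            add_zero]
      map_smul' := fun t β => by
        by_cases hx : x < c
        · rw [RingHom.id_apply, psiFun_pos hIb hN hcb hx, psiFun_pos hIb hN hcb hx]
          refine Subtype.ext ?_
          show vl ((t • β).app ⟨b, le_trans hx.le hcb⟩ (elt (le_refl b) 1)) = _
          rw [NatTrans.app_smul]
          rfl
        · rw [RingHom.id_apply, psiFun_neg hIb hN hcb hx, psiFun_neg hIb hN hcb hx, smul_zero] }
  naturality {x y} f := by
    refine ModuleCat.hom_ext (LinearMap.ext fun β => ?_)
    show psiFun hIb hN hcb y ((homScript k (intervalModule k (Set.Ici b) hIb)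
        (intervalModule k (Set.Ico c d) hN)).map f β)
      = intervalMapAux k (Set.Iio c) x y (psiFun hIb hN hcb x β)
    by_cases hy : y < c
    · have hx : x < c := lt_of_le_of_lt (leOfHom f) hy
      erw [psiFun_pos hIb hN hcb hy, psiFun_pos hIb hN hcb hx,
        mapAux_elt (show x ∈ Set.Iio c from hx) (show y ∈ Set.Iio c from hy)]
      rfl
    · erw [psiFun_neg hIb hN hcb hy]
      exact (intervalMapAux_of_not k (I := Set.Iio c) (a := x) (b := y)
        (fun hmem => hy hmem.2) _).symm

lemma psi_app_apply (hcb : c ≤ b) (x : ℝ)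
    (β : (upIncl x ⋙ intervalModule k (Set.Ici b) hIb) ⟶
      (upIncl x ⋙ intervalModule k (Set.Ico c d) hN)) :
    (psi hIb hN hIio hcb).app x β = psiFun hIb hN hcb x β := rfl

lemma psi_app_surjective (hcb : c ≤ b) (hbd : b < d) (x : ℝ) :
    Function.Surjective ((psi (k := k) hIb hN hIio hcb).app x) := by
  intro t
  by_cases hx : x < c
  · refine ⟨vl t • stdNat 1 x (Set.Ici b) hIb hN
      (fun p q hp hpq => le_trans hp hpq) (fun p hp => hcb.trans hp), ?_⟩
    change psiFun hIb hN hcb x _ = t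
    erw [psiFun_pos hIb hN hcb hx]
    refine Subtype.ext ?_
    show vl ((vl t • stdNat (1 : k) x (Set.Ici b) hIb hN _ _).app
      ⟨b, le_trans hx.le hcb⟩ (elt (le_refl b) 1)) = vl t
    rw [NatTrans.app_smul]
    show vl (vl t • (stdNat (1 : k) x (Set.Ici b) hIb hN _ _).app
      ⟨b, le_trans hx.le hcb⟩ (elt (le_refl b) 1)) = vl t
    erw [vl_smul, stdNat_app, stdApp_pos 1 (show b ∈ Set.Ico c d from ⟨hcb, hbd⟩)]
    show vl t * ((1 : k) * 1) = vl t
    rw [one_mul, mul_one]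
  · refine ⟨0, ?_⟩
    rw [map_zero]
    exact (intervalObj_eq_zero k (show x ∉ Set.Iio c from hx) t).symm

end Psi

section Exactness
variable (hIa : IsConvexSet (Set.Ici a)) (hIb : IsConvexSet (Set.Ici b))
variable (hN : IsConvexSet (Set.Ico c d)) (hIio : IsConvexSet (Set.Iio c))
variable (hcond : ∀ ⦃x y : ℝ⦄, x ≤ y → x ∈ Set.Ici b → y ∈ Set.Ici a →
  (y ∈ Set.Ici b ↔ x ∈ Set.Ici a))

lemma comp_zero (hab : a < b) (hac : a < c) (hcb : c ≤ b) :
    homScriptContraMap k (intervalHom k (Set.Ici b) (Set.Ici a) hIb hIa hcond)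
      (intervalModule k (Set.Ico c d) hN) ≫ psi hIb hN hIio hcb = 0 := by
  refine NatTrans.ext (funext fun x => ?_)
  rw [NatTrans.app_zero]
  refine ModuleCat.hom_ext (LinearMap.ext fun α => ?_)
  rw [ModuleCat.hom_zero, LinearMap.zero_apply]
  show psiFun hIb hN hcb x ((homScriptContraMap k
    (intervalHom k (Set.Ici b) (Set.Ici a) hIb hIa hcond)
    (intervalModule k (Set.Ico c d) hN)).app x α) = 0
  by_cases hx : x < c
  · erw [psiFun_pos hIb hN hcb hx]
    refine vl_eq_zero ?_
    erw [vl_elt, contra_app_apply]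
    have hcr : (intervalHom k (Set.Ici b) (Set.Ici a) hIb hIa hcond).app b
        (elt (le_refl b : b ∈ Set.Ici b) 1) = elt (show b ∈ Set.Ici a from hab.le) 1 :=
      Subtype.ext (intervalCross_coe k (le_refl b) hab.le _)
    erw [hcr]
    have h0 : α.app ⟨b, le_trans hx.le hcb⟩ (elt (show b ∈ Set.Ici a from hab.le) 1) = 0 :=
      beta_zero_from α (p := ⟨max a x, le_max_right a x⟩) (q := ⟨b, le_trans hx.le hcb⟩)
        (max_le hab.le (le_trans hx.le hcb)) (le_max_left a x) hab.le
        (fun hmem => absurd hmem.1 (not_le.mpr (max_lt hac hx))) 1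
    erw [h0, vl_zero]
  · exact psiFun_neg hIb hN hcb hx _

lemma exact_at (hab : a < b) (hcd : c < d) (hac : a < c) (hcb : c ≤ b) (hbd : b < d) (x : ℝ)
    (β : (upIncl x ⋙ intervalModule k (Set.Ici b) hIb) ⟶
      (upIncl x ⋙ intervalModule k (Set.Ico c d) hN))
    (hβ : psiFun hIb hN hcb x β = 0) :
    ∃ α, (homScriptContraMap k (intervalHom k (Set.Ici b) (Set.Ici a) hIb hIa hcond)
      (intervalModule k (Set.Ico c d) hN)).app x α = β := by
  by_cases hx : x < c
  · refine ⟨0, ?_⟩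
    rw [map_zero]
    refine (target_zero_of_app_b_zero β hcb hbd (le_trans hx.le hcb) ?_).symm
    rw [psiFun_pos hIb hN hcb hx] at hβ
    have h1 := congrArg vl hβ
    rw [vl_elt, vl_zero] at h1
    exact vl_eq_zero h1
  · exact phi_app_surjective hIa hIb hN hcond hab hcd x (Or.inl (Or.inr (not_lt.mp hx))) β

end Exactness
end
end ShExtAux


open CategoryTheory Limits in
/-- First sheaf Ext of interval modules, computed as the cokernel of the map obtained by
applying the sheaf internal hom `Hom_sh(−, k[c,d))` to the projective resolution
`0 → k[b,∞) → k[a,∞) → k[a,b) → 0`: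
`Ext¹_sh(k[a,b), k[c,d)) ≅ k(−∞,c)` if `a < c ≤ b < d`, and `0` otherwise. -/
theorem shExt_interval (k : Type) [Field k] (a b c d : ℝ) (hab : a < b) (hcd : c < d) :
    ((a < c ∧ c ≤ b ∧ b < d) →
      Nonempty
        (cokernel (homScriptContraMap k
            (intervalHom k (Set.Ici b) (Set.Ici a)
              (.of_ordConnected Set.ordConnected_Ici)
              (.of_ordConnected Set.ordConnected_Ici)
              (fun x y hxy hx _ => iff_of_true (hx.trans hxy) (le_trans hab.le hx)))
            (intervalModule k (Set.Ico c d) (.of_ordConnected Set.ordConnected_Ico))) ≅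
          intervalModule k (Set.Iio c) (.of_ordConnected Set.ordConnected_Iio))) ∧
    (¬(a < c ∧ c ≤ b ∧ b < d) →
      IsZero
        (cokernel (homScriptContraMap k
          (intervalHom k (Set.Ici b) (Set.Ici a)
            (.of_ordConnected Set.ordConnected_Ici)
            (.of_ordConnected Set.ordConnected_Ici)
            (fun x y hxy hx _ => iff_of_true (hx.trans hxy) (le_trans hab.le hx)))
          (intervalModule k (Set.Ico c d) (.of_ordConnected Set.ordConnected_Ico))))) := by
  have hIa : IsConvexSet (Set.Ici a) := .of_ordConnected Set.ordConnected_Ici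
  have hIb : IsConvexSet (Set.Ici b) := .of_ordConnected Set.ordConnected_Ici
  have hN : IsConvexSet (Set.Ico c d) := .of_ordConnected Set.ordConnected_Ico
  have hIio : IsConvexSet (Set.Iio c) := .of_ordConnected Set.ordConnected_Iio
  have hcond : ∀ ⦃x y : ℝ⦄, x ≤ y → x ∈ Set.Ici b → y ∈ Set.Ici a →
      (y ∈ Set.Ici b ↔ x ∈ Set.Ici a) :=
    fun x y hxy hx _ => iff_of_true (hx.trans hxy) (le_trans hab.le hx)
  constructor
  · rintro ⟨hac, hcb, hbd⟩
    let φ := homScriptContraMap k (intervalHom k (Set.Ici b) (Set.Ici a) hIb hIa hcond)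
      (intervalModule k (Set.Ico c d) hN)
    let ψ := ShExtAux.psi (k := k) hIb hN hIio hcb
    have w : φ ≫ ψ = 0 := ShExtAux.comp_zero hIa hIb hN hIio hcond hab hac hcb
    have hcolim : IsColimit (CokernelCofork.ofπ ψ w) := by
      refine evaluationJointlyReflectsColimits _ fun x => ?_
      refine (isColimitMapCoconeCoforkEquiv' ((evaluation ℝ (ModuleCat k)).obj x) w).symm ?_
      have hz : φ.app x ≫ ψ.app x = 0 := by
        rw [← NatTrans.comp_app, w, NatTrans.app_zero]
      have hex : (ShortComplex.mk (φ.app x) (ψ.app x) hz).Exact :=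
        (ShortComplex.moduleCat_exact_iff _).mpr
          (fun β hβ => ShExtAux.exact_at hIa hIb hN hcond hab hcd hac hcb hbd x β hβ)
      haveI : Epi (ShortComplex.mk (φ.app x) (ψ.app x) hz).g :=
        (ModuleCat.epi_iff_surjective _).mpr
          (ShExtAux.psi_app_surjective hIb hN hIio hcb hbd x)
      exact hex.gIsCokernel
    exact ⟨(cokernelIsCokernel φ).coconePointUniqueUpToIso hcolim⟩
  · intro h
    have tri : ∀ x : ℝ, ((c ≤ a ∨ c ≤ x) ∨ (b < c ∧ x < c) ∨ (d ≤ b ∨ d ≤ x)) := by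
      intro x
      by_cases hca : c ≤ a
      · exact Or.inl (Or.inl hca)
      by_cases hcx : c ≤ x
      · exact Or.inl (Or.inr hcx)
      by_cases hbc : b < c
      · exact Or.inr (Or.inl ⟨hbc, not_le.mp hcx⟩)
      have hdb : d ≤ b := by
        by_contra hbd
        exact h ⟨not_le.mp hca, not_lt.mp hbc, not_le.mp hbd⟩
      exact Or.inr (Or.inr (Or.inl hdb))
    haveI : ∀ x : ℝ, Epi ((homScriptContraMap k
        (intervalHom k (Set.Ici b) (Set.Ici a)
          (.of_ordConnected Set.ordConnected_Ici)
          (.of_ordConnected Set.ordConnected_Ici)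
          (fun x y hxy hx _ => iff_of_true (hx.trans hxy) (le_trans hab.le hx)))
        (intervalModule k (Set.Ico c d) (.of_ordConnected Set.ordConnected_Ico))).app x) :=
      fun x => (ModuleCat.epi_iff_surjective _).mpr
        (ShExtAux.phi_app_surjective _ _ _ _ hab hcd x (tri x))
    haveI : Epi (homScriptContraMap k
        (intervalHom k (Set.Ici b) (Set.Ici a)
          (.of_ordConnected Set.ordConnected_Ici)
          (.of_ordConnected Set.ordConnected_Ici)
          (fun x y hxy hx _ => iff_of_true (hx.trans hxy) (le_trans hab.le hx)))
        (intervalModule k (Set.Ico c d) (.of_ordConnected Set.ordConnected_Ico))) :=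
      NatTrans.epi_of_epi_app _
    exact (isZero_zero _).of_iso (cokernel.ofEpi _)
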